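/- arXiv:2110.12437 — 3 statements merged into one kernel-verified Lean document; each statement's English description precedes it below -/
import Mathlib

section
/- Let K be a linear map with operator norm ‖K‖, and let τ₁, τ₂ > 0 satisfy τ₁τ₂‖K‖² < 1. Define ‖(u,y)‖²_{τ₁τ₂} = ‖u‖²/τ₁ + ‖y‖²/τ₂ - 2⟨Ku, y⟩. Then for all (u,y), ‖u‖² + ‖y‖² ≤ (τ₁ + τ₂)/(1 - τ₁τ₂‖K‖²) · ‖(u,y)‖²_{τ₁τ₂}. -/
theorem stmt_1
    {E F : Type*} [NormedAddCommGroup E] [InnerProductSpace ℝ E]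
    [NormedAddCommGroup F] [InnerProductSpace ℝ F]
    (K : E →L[ℝ] F) (τ₁ τ₂ : ℝ) (hτ₁ : 0 < τ₁) (hτ₂ : 0 < τ₂)
    (hK : τ₁ * τ₂ * ‖K‖ ^ 2 < 1) :
    ∀ (u : E) (y : F),
      ‖u‖ ^ 2 + ‖y‖ ^ 2 ≤
        (τ₁ + τ₂) / (1 - τ₁ * τ₂ * ‖K‖ ^ 2) *
          (‖u‖ ^ 2 / τ₁ + ‖y‖ ^ 2 / τ₂ - 2 * inner ℝ (K u) y) := by
  intro u y
  have hδ : 0 < 1 - τ₁ * τ₂ * ‖K‖ ^ 2 := by linarith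
  have h1 : (inner ℝ (K u) y : ℝ) ≤ ‖K‖ * ‖u‖ * ‖y‖ := by
    calc (inner ℝ (K u) y : ℝ) ≤ ‖K u‖ * ‖y‖ := real_inner_le_norm _ _
      _ ≤ ‖K‖ * ‖u‖ * ‖y‖ :=
        mul_le_mul_of_nonneg_right (K.le_opNorm u) (norm_nonneg y)
  have hττ : 0 < τ₁ * τ₂ := mul_pos hτ₁ hτ₂
  rw [div_mul_eq_mul_div, le_div_iff₀ hδ]
  have hM : ‖u‖ ^ 2 / τ₁ + ‖y‖ ^ 2 / τ₂ - 2 * (inner ℝ (K u) y : ℝ) ≥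
      (‖u‖ ^ 2 * τ₂ + ‖y‖ ^ 2 * τ₁ - 2 * τ₁ * τ₂ * (‖K‖ * ‖u‖ * ‖y‖)) / (τ₁ * τ₂) := by
    have heq : ‖u‖ ^ 2 / τ₁ + ‖y‖ ^ 2 / τ₂ - 2 * (‖K‖ * ‖u‖ * ‖y‖) =
        (‖u‖ ^ 2 * τ₂ + ‖y‖ ^ 2 * τ₁ - 2 * τ₁ * τ₂ * (‖K‖ * ‖u‖ * ‖y‖)) / (τ₁ * τ₂) := by
      field_simp
    rw [← heq]; linarith
  have key : (‖u‖ ^ 2 + ‖y‖ ^ 2) * (1 - τ₁ * τ₂ * ‖K‖ ^ 2) * (τ₁ * τ₂) ≤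
      (τ₁ + τ₂) * (‖u‖ ^ 2 * τ₂ + ‖y‖ ^ 2 * τ₁ - 2 * τ₁ * τ₂ * (‖K‖ * ‖u‖ * ‖y‖)) := by
    nlinarith [sq_nonneg (‖u‖ * τ₂ - ‖y‖ * (τ₁ * τ₂ * ‖K‖)),
      sq_nonneg (‖y‖ * τ₁ - ‖u‖ * (τ₁ * τ₂ * ‖K‖))]
  calc (‖u‖ ^ 2 + ‖y‖ ^ 2) * (1 - τ₁ * τ₂ * ‖K‖ ^ 2)
      ≤ (τ₁ + τ₂) * ((‖u‖ ^ 2 * τ₂ + ‖y‖ ^ 2 * τ₁ - 2 * τ₁ * τ₂ * (‖K‖ * ‖u‖ * ‖y‖)) / (τ₁ * τ₂)) := by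
        rw [mul_div_assoc'] at *
        rw [le_div_iff₀ hττ]
        linarith [key]
    _ ≤ (τ₁ + τ₂) * (‖u‖ ^ 2 / τ₁ + ‖y‖ ^ 2 / τ₂ - 2 * inner ℝ (K u) y) := by
        have := mul_le_mul_of_nonneg_left hM (by linarith : (0:ℝ) ≤ τ₁ + τ₂)
        linarith
end

section
/- Suppose A : ℂ^N → ℂ^m satisfies: for every set Δ of an (s,M)-sparsity pattern and all x, ‖x_Δ‖₂ ≤ ρ‖x_{Δᶜ}‖_{ℓ¹_w}/√ξ + γ‖Ax‖₂, with 0 < ρ < 1, γ > 0. Then for all x, x̂ ∈ ℂ^N with Δ the (s,M)-support of the largest-in-levels entries of x: ‖x̂ - x‖_{ℓ¹_w} ≤ (1+ρ)/(1-ρ) · [‖x̂‖_{ℓ¹_w} - ‖x‖_{ℓ¹_w} + 2σ_{s,M}(x)_{ℓ¹_w} + 2γ√ξ/(1+ρ) · ‖A(x̂-x)‖₂]. -/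
open Finset

/-- weighted ℓ¹ norm with per-level weights -/
noncomputable def l1w {N r : ℕ} (w : Fin r → ℝ) (lvl : Fin N → Fin r)
    (x : Fin N → ℂ) : ℝ :=
  ∑ i, w (lvl i) * ‖x i‖

/-- Euclidean (ℓ²) norm of a finite complex vector -/
noncomputable def l2norm {N : ℕ} (x : Fin N → ℂ) : ℝ :=
  Real.sqrt (∑ i, ‖x i‖ ^ 2)

/-- a set Δ is an (s,M)-support set: at most s k indices in each level k -/
def IsSupportInLevels {N r : ℕ} (lvl : Fin N → Fin r) (s : Fin r → ℕ)
    (Δ : Finset (Fin N)) : Prop :=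
  ∀ k : Fin r, (Δ.filter (fun i => lvl i = k)).card ≤ s k

/-- a vector is (s,M)-sparse in levels -/
def IsSparseInLevels {N r : ℕ} (lvl : Fin N → Fin r) (s : Fin r → ℕ)
    (z : Fin N → ℂ) : Prop :=
  ∃ Δ : Finset (Fin N), IsSupportInLevels lvl s Δ ∧ ∀ i ∉ Δ, z i = 0

/-- distance to (s,M)-sparse vectors in the weighted ℓ¹ norm -/
noncomputable def sigmaSM {N r : ℕ} (w : Fin r → ℝ) (lvl : Fin N → Fin r)
    (s : Fin r → ℕ) (x : Fin N → ℂ) : ℝ :=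
  sInf {t : ℝ | ∃ z : Fin N → ℂ, IsSparseInLevels lvl s z ∧
    t = l1w w lvl (fun i => x i - z i)}

/-- weighted robust null space property in levels -/
def WeightedRNSPL {N r m : ℕ} (w : Fin r → ℝ) (lvl : Fin N → Fin r)
    (s : Fin r → ℕ) (A : (Fin N → ℂ) →ₗ[ℂ] (Fin m → ℂ)) (ρ γ ξ : ℝ) : Prop :=
  ∀ Δ : Finset (Fin N), IsSupportInLevels lvl s Δ →
    ∀ x : Fin N → ℂ,
      l2norm (fun i => if i ∈ Δ then x i else 0) ≤
        ρ * l1w w lvl (fun i => if i ∈ Δ then 0 else x i) / Real.sqrt ξ +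
          γ * l2norm (A x)

section helpers

variable {N r : ℕ} (w : Fin r → ℝ) (lvl : Fin N → Fin r)

lemma l1w_ite_mem (Δ : Finset (Fin N)) (v : Fin N → ℂ) :
    l1w w lvl (fun i => if i ∈ Δ then v i else 0)
      = ∑ i ∈ Δ, w (lvl i) * ‖v i‖ := by
  unfold l1w
  rw [← Finset.sum_subset (Finset.subset_univ Δ)
    (fun i _ hi => by simp [if_neg hi])]
  exact Finset.sum_congr rfl fun i hi => by simp [if_pos hi]

lemma l1w_ite_not_mem (Δ : Finset (Fin N)) (v : Fin N → ℂ) :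
    l1w w lvl (fun i => if i ∈ Δ then 0 else v i)
      = ∑ i ∈ Δᶜ, w (lvl i) * ‖v i‖ := by
  unfold l1w
  rw [← Finset.sum_subset (Finset.subset_univ Δᶜ)
    (fun i _ hi => by
      simp only [Finset.mem_compl, not_not] at hi
      simp [if_pos hi])]
  exact Finset.sum_congr rfl fun i hi => by
    simp [if_neg (Finset.mem_compl.mp hi)]

lemma l2norm_ite_mem (Δ : Finset (Fin N)) (v : Fin N → ℂ) :
    l2norm (fun i => if i ∈ Δ then v i else 0)
      = Real.sqrt (∑ i ∈ Δ, ‖v i‖ ^ 2) := by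
  unfold l2norm
  congr 1
  rw [← Finset.sum_subset (Finset.subset_univ Δ)
    (fun i _ hi => by simp [if_neg hi])]
  exact Finset.sum_congr rfl fun i hi => by simp [if_pos hi]

end helpers

theorem stmt_7 {N r m : ℕ} (w : Fin r → ℝ) (hw : ∀ k, 0 < w k)
    (lvl : Fin N → Fin r) (s : Fin r → ℕ)
    (A : (Fin N → ℂ) →ₗ[ℂ] (Fin m → ℂ)) (ρ γ : ℝ)
    (hρ : 0 < ρ) (hρ1 : ρ < 1) (hγ : 0 < γ)
    (ξ : ℝ) (hξ : ξ = ∑ k, (w k) ^ 2 * (s k : ℝ))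
    (hrnsp : WeightedRNSPL w lvl s A ρ γ ξ) :
    ∀ x xh : Fin N → ℂ,
      l1w w lvl (fun i => xh i - x i) ≤
        (1 + ρ) / (1 - ρ) *
          (l1w w lvl xh - l1w w lvl x + 2 * sigmaSM w lvl s x +
            2 * γ * Real.sqrt ξ / (1 + ρ) *
              l2norm (A (fun i => xh i - x i))) := by
  classical
  have hξ0 : 0 ≤ ξ := by
    rw [hξ]
    exact Finset.sum_nonneg fun k _ =>
      mul_nonneg (sq_nonneg _) (Nat.cast_nonneg _)
  -- sum of squared weights over a support set is at most ξ
  have hwsq : ∀ Δ : Finset (Fin N), IsSupportInLevels lvl s Δ →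
      ∑ i ∈ Δ, (w (lvl i)) ^ 2 ≤ ξ := by
    intro Δ hΔ
    rw [hξ, ← Finset.sum_fiberwise Δ lvl (fun i => (w (lvl i)) ^ 2)]
    apply Finset.sum_le_sum
    intro k _
    calc ∑ i ∈ Δ.filter (fun i => lvl i = k), (w (lvl i)) ^ 2
        = ∑ _i ∈ Δ.filter (fun i => lvl i = k), (w k) ^ 2 :=
          Finset.sum_congr rfl fun i hi => by
            rw [(Finset.mem_filter.mp hi).2]
      _ = ((Δ.filter (fun i => lvl i = k)).card : ℝ) * (w k) ^ 2 := by
          rw [Finset.sum_const, nsmul_eq_mul]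
      _ ≤ (s k : ℝ) * (w k) ^ 2 := by
          apply mul_le_mul_of_nonneg_right _ (sq_nonneg _)
          exact_mod_cast hΔ k
      _ = (w k) ^ 2 * (s k : ℝ) := by ring
  -- Cauchy–Schwarz step
  have hCS : ∀ Δ : Finset (Fin N), IsSupportInLevels lvl s Δ →
      ∀ v : Fin N → ℂ,
      ∑ i ∈ Δ, w (lvl i) * ‖v i‖
        ≤ Real.sqrt ξ * Real.sqrt (∑ i ∈ Δ, ‖v i‖ ^ 2) := by
    intro Δ hΔ v
    have h1 : (∑ i ∈ Δ, w (lvl i) * ‖v i‖) ^ 2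
        ≤ (∑ i ∈ Δ, (w (lvl i)) ^ 2) * ∑ i ∈ Δ, ‖v i‖ ^ 2 :=
      Finset.sum_mul_sq_le_sq_mul_sq Δ _ _
    have hsq : 0 ≤ ∑ i ∈ Δ, ‖v i‖ ^ 2 :=
      Finset.sum_nonneg fun i _ => sq_nonneg _
    have h2 : (∑ i ∈ Δ, (w (lvl i)) ^ 2) * ∑ i ∈ Δ, ‖v i‖ ^ 2
        ≤ ξ * ∑ i ∈ Δ, ‖v i‖ ^ 2 :=
      mul_le_mul_of_nonneg_right (hwsq Δ hΔ) hsq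
    have hs : 0 ≤ ∑ i ∈ Δ, w (lvl i) * ‖v i‖ :=
      Finset.sum_nonneg fun i _ =>
        mul_nonneg (hw _).le (norm_nonneg _)
    calc ∑ i ∈ Δ, w (lvl i) * ‖v i‖
        = Real.sqrt ((∑ i ∈ Δ, w (lvl i) * ‖v i‖) ^ 2) :=
          (Real.sqrt_sq hs).symm
      _ ≤ Real.sqrt (ξ * ∑ i ∈ Δ, ‖v i‖ ^ 2) :=
          Real.sqrt_le_sqrt (le_trans h1 h2)
      _ = Real.sqrt ξ * Real.sqrt (∑ i ∈ Δ, ‖v i‖ ^ 2) :=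
          Real.sqrt_mul hξ0 _
  -- the key ℓ¹ consequence of the RNSP
  have hA : ∀ Δ : Finset (Fin N), IsSupportInLevels lvl s Δ →
      ∀ v : Fin N → ℂ,
      ∑ i ∈ Δ, w (lvl i) * ‖v i‖
        ≤ ρ * ∑ i ∈ Δᶜ, w (lvl i) * ‖v i‖
          + γ * Real.sqrt ξ * l2norm (A v) := by
    intro Δ hΔ v
    have hr := hrnsp Δ hΔ v
    rw [l2norm_ite_mem, l1w_ite_not_mem] at hr
    have hb : 0 ≤ ∑ i ∈ Δᶜ, w (lvl i) * ‖v i‖ :=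
      Finset.sum_nonneg fun i _ =>
        mul_nonneg (hw _).le (norm_nonneg _)
    have hE : 0 ≤ l2norm (A v) := Real.sqrt_nonneg _
    have hcs := hCS Δ hΔ v
    rcases eq_or_lt_of_le (Real.sqrt_nonneg ξ) with h0 | h0
    · have hz : Real.sqrt ξ * Real.sqrt (∑ i ∈ Δ, ‖v i‖ ^ 2)
          = 0 := by rw [← h0, zero_mul]
      nlinarith [mul_nonneg hρ.le hb, mul_nonneg (mul_nonneg hγ.le (Real.sqrt_nonneg ξ)) hE]
    · have h3 : Real.sqrt ξ * Real.sqrt (∑ i ∈ Δ, ‖v i‖ ^ 2)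
          ≤ Real.sqrt ξ *
            (ρ * (∑ i ∈ Δᶜ, w (lvl i) * ‖v i‖) / Real.sqrt ξ
              + γ * l2norm (A v)) :=
        mul_le_mul_of_nonneg_left hr h0.le
      have h4 : Real.sqrt ξ *
            (ρ * (∑ i ∈ Δᶜ, w (lvl i) * ‖v i‖) / Real.sqrt ξ
              + γ * l2norm (A v))
          = ρ * (∑ i ∈ Δᶜ, w (lvl i) * ‖v i‖)
              + γ * Real.sqrt ξ * l2norm (A v) := by
        field_simp
      linarith
  intro x xh
  -- choose the optimal support set for x
  obtain ⟨Δ, hΔmem, hΔmax⟩ := Finset.exists_max_image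
    ((Finset.univ : Finset (Finset (Fin N))).filter
      fun Δ => IsSupportInLevels lvl s Δ)
    (fun Δ => ∑ i ∈ Δ, w (lvl i) * ‖x i‖)
    ⟨∅, Finset.mem_filter.mpr ⟨Finset.mem_univ _, fun k => by simp⟩⟩
  have hΔ : IsSupportInLevels lvl s Δ := (Finset.mem_filter.mp hΔmem).2
  set v : Fin N → ℂ := fun i => xh i - x i with hv
  set a := ∑ i ∈ Δ, w (lvl i) * ‖v i‖ with ha
  set b := ∑ i ∈ Δᶜ, w (lvl i) * ‖v i‖ with hbdef
  set p := ∑ i ∈ Δ, w (lvl i) * ‖x i‖ with hp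
  set q := ∑ i ∈ Δᶜ, w (lvl i) * ‖x i‖ with hq
  set P := ∑ i ∈ Δ, w (lvl i) * ‖xh i‖ with hP
  set Q := ∑ i ∈ Δᶜ, w (lvl i) * ‖xh i‖ with hQ
  set E := l2norm (A v) with hE
  set σ := sigmaSM w lvl s x with hσdef
  have hsplit_v : l1w w lvl v = a + b := by
    unfold l1w; exact (Finset.sum_add_sum_compl Δ _).symm
  have hsplit_x : l1w w lvl x = p + q := by
    unfold l1w; exact (Finset.sum_add_sum_compl Δ _).symm
  have hsplit_xh : l1w w lvl xh = P + Q := by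
    unfold l1w; exact (Finset.sum_add_sum_compl Δ _).symm
  -- σ lower bound
  have hσq : q ≤ σ := by
    rw [hσdef]
    unfold sigmaSM
    apply le_csInf
    · exact ⟨l1w w lvl (fun i => x i - (0 : ℂ)),
        fun _ => 0, ⟨∅, fun k => by simp, fun i _ => rfl⟩, rfl⟩
    · rintro t ⟨z, ⟨Δ', hΔ', hz⟩, rfl⟩
      have h1 : ∑ i ∈ Δ'ᶜ, w (lvl i) * ‖x i - z i‖
          ≤ l1w w lvl (fun i => x i - z i) := by
        unfold l1w
        exact Finset.sum_le_sum_of_subset_of_nonneg (Finset.subset_univ _)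
          (fun i _ _ => mul_nonneg (hw _).le (norm_nonneg _))
      have h2 : ∑ i ∈ Δ'ᶜ, w (lvl i) * ‖x i - z i‖
          = ∑ i ∈ Δ'ᶜ, w (lvl i) * ‖x i‖ :=
        Finset.sum_congr rfl fun i hi => by
          rw [hz i (Finset.mem_compl.mp hi), sub_zero]
      have h3 : ∑ i ∈ Δ', w (lvl i) * ‖x i‖ ≤ p :=
        hΔmax Δ' (Finset.mem_filter.mpr ⟨Finset.mem_univ _, hΔ'⟩)
      have h4 : ∑ i ∈ Δ', w (lvl i) * ‖x i‖
          + ∑ i ∈ Δ'ᶜ, w (lvl i) * ‖x i‖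
          = p + q := by
        rw [hp, hq, Finset.sum_add_sum_compl, Finset.sum_add_sum_compl]
      linarith
  -- triangle inequalities
  have habs1 : ∀ i, ‖x i‖ - ‖v i‖
      ≤ ‖xh i‖ := by
    intro i
    have h := norm_sub_norm_le (x i) (xh i)
    rw [norm_sub_rev] at h
    have : v i = xh i - x i := rfl
    rw [this]
    linarith
  have habs2 : ∀ i, ‖v i‖ - ‖x i‖
      ≤ ‖xh i‖ := by
    intro i
    have h := norm_sub_le (xh i) (x i)
    have : v i = xh i - x i := rfl
    rw [this]
    linarith
  have hT1 : p - a ≤ P := by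
    rw [hp, ha, hP, ← Finset.sum_sub_distrib]
    apply Finset.sum_le_sum
    intro i _
    have := mul_le_mul_of_nonneg_left (habs1 i) (hw (lvl i)).le
    nlinarith [this]
  have hT2 : b - q ≤ Q := by
    rw [hbdef, hq, hQ, ← Finset.sum_sub_distrib]
    apply Finset.sum_le_sum
    intro i _
    have := mul_le_mul_of_nonneg_left (habs2 i) (hw (lvl i)).le
    nlinarith [this]
  have hAv : a ≤ ρ * b + γ * Real.sqrt ξ * E := hA Δ hΔ v
  have hbnn : 0 ≤ b :=
    Finset.sum_nonneg fun i _ => mul_nonneg (hw _).le (norm_nonneg _)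
  have hEnn : 0 ≤ E := Real.sqrt_nonneg _
  have h1ρ : (0:ℝ) < 1 - ρ := by linarith
  have h1ρ' : (0:ℝ) < 1 + ρ := by linarith
  rw [hsplit_v, hsplit_x, hsplit_xh, div_mul_eq_mul_div, le_div_iff₀ h1ρ]
  have key : (1 + ρ) * ((P + Q) - (p + q) + 2 * σ
        + 2 * γ * Real.sqrt ξ / (1 + ρ) * E)
      = (1 + ρ) * ((P + Q) - (p + q) + 2 * σ)
        + 2 * (γ * Real.sqrt ξ * E) := by
    field_simp
  rw [key]
  nlinarith [mul_le_mul_of_nonneg_left hAv h1ρ.le,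
    mul_le_mul_of_nonneg_left hT1 h1ρ'.le,
    mul_le_mul_of_nonneg_left hT2 h1ρ'.le,
    mul_le_mul_of_nonneg_left hσq h1ρ'.le,
    mul_nonneg (mul_nonneg hγ.le (Real.sqrt_nonneg ξ)) hEnn,
    mul_nonneg hρ.le hbnn, mul_pos h1ρ h1ρ']
end

section
/- If x is (s,M)-sparse in levels and A satisfies the weighted rNSP in levels with constants ρ ∈ (0,1) and γ > 0, then for every z in the kernel of A, ‖x‖_{ℓ¹_w} ≤ ‖x + z‖_{ℓ¹_w} · (1+ρ)/(1-ρ); in particular, in the noiseless case every (s,M)-sparse vector is within the stated factor of being the unique ℓ¹_w-minimizer subject to the measurement constraint. -/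
open Finset

theorem stmt_8 {N r m : ℕ} (w : Fin r → ℝ) (hw : ∀ k, 0 < w k)
    (lvl : Fin N → Fin r) (s : Fin r → ℕ)
    (A : (Fin N → ℂ) →ₗ[ℂ] (Fin m → ℂ)) (ρ γ : ℝ)
    (hρ : 0 < ρ) (hρ1 : ρ < 1) (hγ : 0 < γ)
    (ξ : ℝ) (hξ : ξ = ∑ k, (w k) ^ 2 * (s k : ℝ))
    (hrnsp : WeightedRNSPL w lvl s A ρ γ ξ)
    (x : Fin N → ℂ) (hx : IsSparseInLevels lvl s x) :
    ∀ z : Fin N → ℂ, A z = 0 →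
      l1w w lvl x ≤ l1w w lvl (fun i => x i + z i) * ((1 + ρ) / (1 - ρ)) := by
  intro z hz
  obtain ⟨Δ, hΔ, hxsupp⟩ := hx
  have hwnn : ∀ i, (0:ℝ) ≤ w (lvl i) := fun i => (hw (lvl i)).le
  -- the rNSP applied to z with Az = 0
  have hAz : l2norm (A z) = 0 := by simp [hz, l2norm]
  have h1 := hrnsp Δ hΔ z
  rw [hAz, mul_zero, add_zero] at h1
  -- notation for partial l1 norms of z
  set a : ℝ := ∑ i ∈ Δ, w (lvl i) * ‖z i‖ with ha
  set b : ℝ := l1w w lvl (fun i => if i ∈ Δ then 0 else z i) with hbdef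
  have hbnn : 0 ≤ b := by
    rw [hbdef, l1w]
    exact Finset.sum_nonneg fun i _ => mul_nonneg (hwnn i) (norm_nonneg _)
  -- Cauchy–Schwarz: a ≤ √ξ * l2norm zΔ
  have hCS : a ≤ Real.sqrt ξ * l2norm (fun i => if i ∈ Δ then z i else 0) := by
    have h2 : a ≤ Real.sqrt (∑ i ∈ Δ, w (lvl i) ^ 2) *
        Real.sqrt (∑ i ∈ Δ, ‖z i‖ ^ 2) :=
      Real.sum_mul_le_sqrt_mul_sqrt Δ (fun i => w (lvl i)) (fun i => ‖z i‖)
    have hw2 : ∑ i ∈ Δ, w (lvl i) ^ 2 ≤ ξ := by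
      rw [hξ]
      have := Finset.sum_fiberwise Δ lvl (fun i => w (lvl i) ^ 2)
      rw [← this]
      refine Finset.sum_le_sum fun k _ => ?_
      calc ∑ i ∈ Δ.filter (fun i => lvl i = k), w (lvl i) ^ 2
          = ∑ i ∈ Δ.filter (fun i => lvl i = k), w k ^ 2 := by
            refine Finset.sum_congr rfl fun i hi => ?_
            rw [(Finset.mem_filter.1 hi).2]
        _ = (Δ.filter (fun i => lvl i = k)).card * w k ^ 2 := by
            rw [Finset.sum_const, nsmul_eq_mul]
        _ ≤ (s k : ℝ) * w k ^ 2 := by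
            refine mul_le_mul_of_nonneg_right ?_ (sq_nonneg _)
            exact_mod_cast hΔ k
        _ = w k ^ 2 * (s k : ℝ) := mul_comm _ _
    have h3 : Real.sqrt (∑ i ∈ Δ, w (lvl i) ^ 2) ≤ Real.sqrt ξ :=
      Real.sqrt_le_sqrt hw2
    have h4 : l2norm (fun i => if i ∈ Δ then z i else 0) =
        Real.sqrt (∑ i ∈ Δ, ‖z i‖ ^ 2) := by
      rw [l2norm]
      congr 1
      rw [← Finset.sum_add_sum_compl Δ]
      have h0 : ∑ i ∈ Δᶜ, ‖if i ∈ Δ then z i else 0‖ ^ 2 = 0 :=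
        Finset.sum_eq_zero fun i hi => by simp [Finset.mem_compl.1 hi]
      rw [h0, add_zero]
      exact Finset.sum_congr rfl fun i hi => by rw [if_pos hi]
    rw [h4]
    refine h2.trans (mul_le_mul_of_nonneg_right h3 (Real.sqrt_nonneg _))
  -- hence a ≤ ρ * b
  have hab : a ≤ ρ * b := by
    rcases eq_or_lt_of_le (Real.sqrt_nonneg ξ) with hs0 | hs0
    · have : Real.sqrt ξ * l2norm (fun i => if i ∈ Δ then z i else 0) = 0 := by
        rw [← hs0, zero_mul]
      have := hCS.trans_eq this
      exact this.trans (mul_nonneg hρ.le hbnn)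
    · have h5 : Real.sqrt ξ * (ρ * b / Real.sqrt ξ) = ρ * b := by
        field_simp
      calc a ≤ Real.sqrt ξ * l2norm (fun i => if i ∈ Δ then z i else 0) := hCS
        _ ≤ Real.sqrt ξ * (ρ * b / Real.sqrt ξ) :=
            mul_le_mul_of_nonneg_left h1 (Real.sqrt_nonneg _)
        _ = ρ * b := h5
  -- b equals the l1 norm of (x+z) off Δ
  have hboff : b = ∑ i ∈ Δᶜ, w (lvl i) * ‖x i + z i‖ := by
    rw [hbdef, l1w, ← Finset.sum_add_sum_compl Δ]
    have h0 : ∑ i ∈ Δ, w (lvl i) * ‖if i ∈ Δ then 0 else z i‖ = 0 := by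
      refine Finset.sum_eq_zero fun i hi => by simp [hi]
    rw [h0, zero_add]
    refine Finset.sum_congr rfl fun i hi => ?_
    have hni : i ∉ Δ := Finset.mem_compl.1 hi
    rw [if_neg hni, hxsupp i hni, zero_add]
  -- main estimate: l1w x ≤ aΔ + a where aΔ = ∑_Δ w|x+z|
  have hmain : l1w w lvl x ≤ (∑ i ∈ Δ, w (lvl i) * ‖x i + z i‖) + a := by
    rw [l1w, ← Finset.sum_add_sum_compl Δ]
    have hx0 : ∑ i ∈ Δᶜ, w (lvl i) * ‖x i‖ = 0 :=
      Finset.sum_eq_zero fun i hi => by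
        rw [hxsupp i (Finset.mem_compl.1 hi)]; simp
    rw [hx0, add_zero, ha, ← Finset.sum_add_distrib]
    refine Finset.sum_le_sum fun i _ => ?_
    rw [← mul_add]
    refine mul_le_mul_of_nonneg_left ?_ (hwnn i)
    calc ‖x i‖ = ‖(x i + z i) + (-z i)‖ := by
          congr 1; ring
      _ ≤ ‖x i + z i‖ + ‖-z i‖ := norm_add_le _ _
      _ = ‖x i + z i‖ + ‖z i‖ := by rw [norm_neg]
  -- put it together
  have hxz : l1w w lvl (fun i => x i + z i) =
      (∑ i ∈ Δ, w (lvl i) * ‖x i + z i‖) +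
        ∑ i ∈ Δᶜ, w (lvl i) * ‖x i + z i‖ := by
    rw [l1w, Finset.sum_add_sum_compl]
  have hle : l1w w lvl x ≤ l1w w lvl (fun i => x i + z i) := by
    rw [hxz]
    refine hmain.trans ?_
    have : a ≤ ∑ i ∈ Δᶜ, w (lvl i) * ‖x i + z i‖ := by
      rw [← hboff]
      exact hab.trans (by nlinarith)
    linarith
  have hfac : (1:ℝ) ≤ (1 + ρ) / (1 - ρ) := by
    rw [le_div_iff₀ (by linarith)]
    linarith
  have hnn : 0 ≤ l1w w lvl (fun i => x i + z i) :=
    Finset.sum_nonneg fun i _ => mul_nonneg (hwnn i) (norm_nonneg _)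
  calc l1w w lvl x ≤ l1w w lvl (fun i => x i + z i) := hle
    _ = l1w w lvl (fun i => x i + z i) * 1 := (mul_one _).symm
    _ ≤ l1w w lvl (fun i => x i + z i) * ((1 + ρ) / (1 - ρ)) :=
        mul_le_mul_of_nonneg_left hfac hnn
end
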